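/- Let n ≥ 4 and let T be a triangulation of a convex (n+2)-gon. Then 2^(n−2) ≤ ∏_{i ∈ ℤ/(n+2)} catalan (deg_T i), and (∏_{i ∈ ℤ/(n+2)} catalan (deg_T i))^2 ≤ 2^(5n−14) (i.e. the product is at most 2^{(5/2)n − 7}). -/

import Mathlib

/-- We label the vertices of a convex `m`-gon by `Fin m` in cyclic order, and
represent a diagonal by the ordered pair of its endpoints, smaller label first.
`p` is a diagonal if its endpoints are distinct and non-adjacent in the cyclic
order. -/
def IsDiagonal (m : ℕ) (p : Fin m × Fin m) : Prop :=
  (p.1 : ℕ) + 1 < (p.2 : ℕ) ∧ ¬((p.1 : ℕ) = 0 ∧ (p.2 : ℕ) + 1 = m)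

/-- Two diagonals (each given with its smaller endpoint first) cross iff exactly
one endpoint of each lies strictly between the two endpoints of the other in the
cyclic order; for pairs ordered as above this is expressed by the following two
"exactly one" (Xor) conditions, which amount to the four endpoints being
distinct and alternating around the polygon. -/
def Crosses (m : ℕ) (p q : Fin m × Fin m) : Prop :=
  Xor' (p.1 < q.1 ∧ q.1 < p.2) (p.1 < q.2 ∧ q.2 < p.2) ∧
  Xor' (q.1 < p.1 ∧ p.1 < q.2) (q.1 < p.2 ∧ p.2 < q.2)

/-- `T` is a triangulation of the convex `m`-gon: a maximal set of pairwise
non-crossing diagonals. -/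
def IsTriangulation (m : ℕ) (T : Finset (Fin m × Fin m)) : Prop :=
  (∀ p ∈ T, IsDiagonal m p) ∧
  (∀ p ∈ T, ∀ q ∈ T, ¬ Crosses m p q) ∧
  (∀ q : Fin m × Fin m, IsDiagonal m q → q ∉ T → ∃ p ∈ T, Crosses m p q)

/-- The degree of vertex `i` in `T`: the number of diagonals of `T` containing `i`. -/
def degT {m : ℕ} (T : Finset (Fin m × Fin m)) (i : Fin m) : ℕ :=
  (T.filter (fun p => p.1 = i ∨ p.2 = i)).card


-- Catalan lemmas
lemma catalan_lower {d : ℕ} (hd : 1 ≤ d) : 2 ^ d ≤ 2 * catalan d := by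
  induction d with
  | zero => omega
  | succ k ih =>
    rcases Nat.eq_or_lt_of_le hd with h | h
    · simp [← h, catalan_one]
    · have hk : 1 ≤ k := by omega
      have h2 : 2 * catalan k ≤ catalan (k + 1) := by
        rw [catalan_succ k]
        have hsub : ({⟨0, by omega⟩, ⟨k, by omega⟩} : Finset (Fin k.succ)) ⊆ Finset.univ :=
          Finset.subset_univ _
        have hne : (⟨0, by omega⟩ : Fin k.succ) ≠ ⟨k, by omega⟩ := by
          simp [Fin.ext_iff]; omega
        calc 2 * catalan k
            = ∑ i ∈ ({⟨0, by omega⟩, ⟨k, by omega⟩} : Finset (Fin k.succ)),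
                catalan i.val * catalan (k - i.val) := by
              rw [Finset.sum_pair hne]
              simp [catalan_zero]
              ring
          _ ≤ ∑ i : Fin k.succ, catalan i.val * catalan (k - i.val) :=
              Finset.sum_le_sum_of_subset hsub
      calc 2 ^ (k+1) = 2 * 2 ^ k := by ring
        _ ≤ 2 * (2 * catalan k) := by omega
        _ ≤ 2 * catalan (k+1) := by omega

lemma catalan_ratio (d : ℕ) : catalan (d + 1) ≤ 4 * catalan d := by
  have h1 : (d + 2) * catalan (d + 1) = (d+1+1) * catalan (d+1) := by ring_nf
  have h2 := succ_mul_catalan_eq_centralBinom (d+1)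
  have h3 := succ_mul_catalan_eq_centralBinom d
  have h4 := Nat.succ_mul_centralBinom_succ d
  -- (d+2)*catalan(d+1) = centralBinom (d+1), (d+1)*centralBinom(d+1) = 2(2d+1) centralBinom d
  -- (d+1)*(d+2)*catalan (d+1) = 2*(2d+1)*(d+1)*catalan d
  have h5 : (d+1) * ((d + 2) * catalan (d+1)) = 2*(2*d+1) * ((d+1) * catalan d) := by
    rw [h1, h2, h3, h4]
  have h6 : (d+1) * ((d + 2) * catalan (d+1)) ≤ (d+1) * ((d+2) * (4 * catalan d)) := by
    calc (d+1) * ((d + 2) * catalan (d+1)) = 2*(2*d+1) * ((d+1) * catalan d) := h5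
      _ ≤ 4*(d+2) * ((d+1) * catalan d) := by
          apply Nat.mul_le_mul_right; omega
      _ = (d+1) * ((d+2) * (4 * catalan d)) := by ring
  have := Nat.le_of_mul_le_mul_left h6 (by omega : 0 < d + 1)
  exact Nat.le_of_mul_le_mul_left this (by omega : 0 < d + 2)

lemma catalan_upper {d : ℕ} (hd : 2 ≤ d) : 8 * catalan d ≤ 4 ^ d := by
  induction d with
  | zero => omega
  | succ k ih =>
    rcases Nat.eq_or_lt_of_le hd with h | h
    · rw [← h]; norm_num [catalan_two]
    · have hk : 2 ≤ k := by omega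
      calc 8 * catalan (k+1) ≤ 8 * (4 * catalan k) := by
            have := catalan_ratio k; omega
        _ = 4 * (8 * catalan k) := by ring
        _ ≤ 4 * 4 ^ k := by have := ih hk; omega
        _ = 4 ^ (k+1) := by ring

-- crossing characterization
lemma crosses_iff {m : ℕ} (p q : Fin m × Fin m) (hp : (p.1:ℕ) + 1 < p.2)
    (hq : (q.1:ℕ) + 1 < q.2) :
    Crosses m p q ↔ (((p.1:ℕ) < q.1 ∧ (q.1:ℕ) < p.2 ∧ (p.2:ℕ) < q.2) ∨
      ((q.1:ℕ) < p.1 ∧ (p.1:ℕ) < q.2 ∧ (q.2:ℕ) < p.2)) := by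
  unfold Crosses Xor'
  simp only [Fin.lt_def, Xor]
  omega
section Tri

variable {m : ℕ} {T : Finset (Fin m × Fin m)}

/-- Membership by values. -/
def MemT (T : Finset (Fin m × Fin m)) (x y : ℕ) : Prop :=
  ∃ p ∈ T, (p.1 : ℕ) = x ∧ (p.2 : ℕ) = y

lemma mem_bounds (hT : IsTriangulation m T) {p : Fin m × Fin m} (hp : p ∈ T) :
    (p.1:ℕ) + 1 < p.2 ∧ (p.2:ℕ) < m ∧ ¬((p.1:ℕ) = 0 ∧ (p.2:ℕ) + 1 = m) := by
  obtain ⟨h1, h2⟩ := hT.1 p hp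
  exact ⟨h1, p.2.isLt, h2⟩

lemma memT_bounds (hT : IsTriangulation m T) {x y : ℕ} (h : MemT T x y) :
    x + 1 < y ∧ y < m ∧ ¬(x = 0 ∧ y + 1 = m) := by
  obtain ⟨p, hp, h1, h2⟩ := h
  have := mem_bounds hT hp
  omega

lemma noncross (hT : IsTriangulation m T) {p q : Fin m × Fin m}
    (hp : p ∈ T) (hq : q ∈ T) :
    ¬((p.1:ℕ) < q.1 ∧ (q.1:ℕ) < p.2 ∧ (p.2:ℕ) < q.2) := by
  intro hpat
  refine hT.2.1 p hp q hq ?_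
  rw [crosses_iff p q (mem_bounds hT hp).1 (mem_bounds hT hq).1]
  exact Or.inl hpat

lemma noncross' (hT : IsTriangulation m T) {x y x' y' : ℕ}
    (h : MemT T x y) (h' : MemT T x' y') :
    ¬(x < x' ∧ x' < y ∧ y < y') := by
  obtain ⟨p, hp, h1, h2⟩ := h
  obtain ⟨q, hq, h3, h4⟩ := h'
  intro hpat
  exact noncross hT hp hq (by omega)

lemma exists_cross (hT : IsTriangulation m T) {x y : ℕ} (hxy : x + 1 < y) (hy : y < m)
    (hw : ¬(x = 0 ∧ y + 1 = m)) (hnot : ¬ MemT T x y) :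
    ∃ p ∈ T, (((p.1:ℕ) < x ∧ x < (p.2:ℕ) ∧ (p.2:ℕ) < y) ∨
      (x < (p.1:ℕ) ∧ (p.1:ℕ) < y ∧ y < (p.2:ℕ))) := by
  set q : Fin m × Fin m := (⟨x, by omega⟩, ⟨y, hy⟩) with hqdef
  have hq1 : (q.1 : ℕ) = x := rfl
  have hq2 : (q.2 : ℕ) = y := rfl
  have hdiag : IsDiagonal m q := ⟨by simp only [hq1, hq2]; omega, by simp only [hq1, hq2]; omega⟩
  have hqnot : q ∉ T := fun h => hnot ⟨q, h, rfl, rfl⟩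
  obtain ⟨p, hp, hc⟩ := hT.2.2 q hdiag hqnot
  rw [crosses_iff p q (mem_bounds hT hp).1 (by simpa [hq1, hq2])] at hc
  exact ⟨p, hp, by rw [hq1, hq2] at hc; exact hc⟩

/-- boundary property of an arc -/
def BdP (T : Finset (Fin m × Fin m)) (a b : ℕ) : Prop :=
  ∀ p ∈ T, ((a < (p.1:ℕ) ∧ (p.1:ℕ) < b) ∨ (a < (p.2:ℕ) ∧ (p.2:ℕ) < b)) →
    a ≤ (p.1:ℕ) ∧ (p.2:ℕ) ≤ b

lemma bd_of_memT (hT : IsTriangulation m T) {a b : ℕ} (h : MemT T a b) : BdP T a b := by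
  obtain ⟨q, hq, h1, h2⟩ := h
  intro p hp hmid
  rcases hmid with ⟨ha, hb⟩ | ⟨ha, hb⟩
  · refine ⟨by omega, ?_⟩
    by_contra hc
    exact noncross hT hq hp (by omega)
  · refine ⟨?_, by omega⟩
    by_contra hc
    exact noncross hT hp hq (by omega)

lemma bd_full (hm1 : 1 ≤ m) : BdP T 0 (m - 1) := by
  intro p _ _
  have := p.2.isLt
  omega

lemma bd_hull {a b : ℕ} (hab : b ≤ a + 1) : BdP T a b := by
  intro p _ h
  omega

-- degree helpers
lemma deg_pos (hT : IsTriangulation m T) {p : Fin m × Fin m} (hp : p ∈ T) {i : Fin m}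
    (h : p.1 = i ∨ p.2 = i) : 1 ≤ degT T i := by
  have : p ∈ T.filter (fun p => p.1 = i ∨ p.2 = i) := Finset.mem_filter.2 ⟨hp, h⟩
  have := Finset.card_pos.2 ⟨p, this⟩
  unfold degT; omega

lemma deg_pos_val (hT : IsTriangulation m T) {x y : ℕ} (h : MemT T x y) {i : Fin m}
    (hi : (i:ℕ) = x ∨ (i:ℕ) = y) : 1 ≤ degT T i := by
  obtain ⟨p, hp, h1, h2⟩ := h
  refine deg_pos hT hp ?_
  rcases hi with hi | hi
  · exact Or.inl (Fin.ext (by omega))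
  · exact Or.inr (Fin.ext (by omega))

lemma deg_zero {i : Fin m} (hd : degT T i = 0) {p : Fin m × Fin m} (hp : p ∈ T) :
    (p.1:ℕ) ≠ i ∧ (p.2:ℕ) ≠ i := by
  have he : T.filter (fun p => p.1 = i ∨ p.2 = i) = ∅ := Finset.card_eq_zero.1 hd
  have := Finset.filter_eq_empty_iff.1 he hp
  push_neg at this
  exact ⟨fun h => this.1 (Fin.ext h), fun h => this.2 (Fin.ext h)⟩

lemma deg_one_unique {i : Fin m} (hd : degT T i = 1) {p q : Fin m × Fin m} (hp : p ∈ T) (hq : q ∈ T)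
    (h1 : (p.1:ℕ) = i ∨ (p.2:ℕ) = i) (h2 : (q.1:ℕ) = i ∨ (q.2:ℕ) = i) : p = q := by
  have hle : (T.filter (fun p => p.1 = i ∨ p.2 = i)).card ≤ 1 := le_of_eq hd
  rw [Finset.card_le_one] at hle
  refine hle _ (Finset.mem_filter.2 ⟨hp, ?_⟩) _ (Finset.mem_filter.2 ⟨hq, ?_⟩)
  · rcases h1 with h | h
    · exact Or.inl (Fin.ext h)
    · exact Or.inr (Fin.ext h)
  · rcases h2 with h | h
    · exact Or.inl (Fin.ext h)
    · exact Or.inr (Fin.ext h)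

lemma deg_two (hT : IsTriangulation m T) {x y x' y' : ℕ} (h : MemT T x y) (h' : MemT T x' y')
    (hne : ¬(x = x' ∧ y = y')) {i : Fin m}
    (hi : (i:ℕ) = x ∨ (i:ℕ) = y) (hi' : (i:ℕ) = x' ∨ (i:ℕ) = y') : 2 ≤ degT T i := by
  obtain ⟨p, hp, hp1, hp2⟩ := h
  obtain ⟨q, hq, hq1, hq2⟩ := h'
  have hpq : p ≠ q := by
    intro hh; rw [hh] at hp1 hp2; exact hne (by omega)
  have hmem : ∀ r ∈ T, (r.1:ℕ) = i ∨ (r.2:ℕ) = i →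
      r ∈ T.filter (fun p => p.1 = i ∨ p.2 = i) := by
    intro r hr h
    refine Finset.mem_filter.2 ⟨hr, ?_⟩
    rcases h with h | h
    · exact Or.inl (Fin.ext h)
    · exact Or.inr (Fin.ext h)
  have := Finset.one_lt_card.2 ⟨p, hmem p hp (by omega), q, hmem q hq (by omega), hpq⟩
  unfold degT; omega

end Tri
section Count

variable {m : ℕ} {T : Finset (Fin m × Fin m)}

open Classical in
noncomputable def Garc (T : Finset (Fin m × Fin m)) (a b : ℕ) : Finset (Fin m × Fin m) :=
  T.filter (fun p => a ≤ (p.1:ℕ) ∧ (p.2:ℕ) ≤ b)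

open Classical in
noncomputable def Farc (T : Finset (Fin m × Fin m)) (a b : ℕ) : Finset (Fin m × Fin m) :=
  T.filter (fun p => a ≤ (p.1:ℕ) ∧ (p.2:ℕ) ≤ b ∧ ¬((p.1:ℕ) = a ∧ (p.2:ℕ) = b))

lemma garc_card_of_memT {a b : ℕ} (hM : MemT T a b) :
    (Garc T a b).card = (Farc T a b).card + 1 := by
  classical
  obtain ⟨q, hq, hq1, hq2⟩ := hM
  have hqG : q ∈ Garc T a b := Finset.mem_filter.2 ⟨hq, by omega⟩
  have hF : Farc T a b = (Garc T a b).erase q := by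
    ext p
    simp only [Farc, Garc, Finset.mem_filter, Finset.mem_erase]
    constructor
    · rintro ⟨hp, h1, h2, h3⟩
      refine ⟨?_, hp, h1, h2⟩
      intro hh; rw [hh] at h3; exact h3 ⟨hq1, hq2⟩
    · rintro ⟨hne, hp, h1, h2⟩
      refine ⟨hp, h1, h2, ?_⟩
      rintro ⟨e1, e2⟩
      exact hne (Prod.ext (Fin.ext (by omega)) (Fin.ext (by omega)))
  rw [hF, Finset.card_erase_of_mem hqG]
  have : 0 < (Garc T a b).card := Finset.card_pos.2 ⟨q, hqG⟩
  omega

lemma garc_card_of_not {a b : ℕ} (hM : ¬ MemT T a b) :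
    (Garc T a b).card = (Farc T a b).card := by
  classical
  congr 1
  ext p
  simp only [Farc, Garc, Finset.mem_filter]
  constructor
  · rintro ⟨hp, h1, h2⟩
    refine ⟨hp, h1, h2, ?_⟩
    rintro ⟨e1, e2⟩
    exact hM ⟨p, hp, e1, e2⟩
  · rintro ⟨hp, h1, h2, _⟩
    exact ⟨hp, h1, h2⟩

lemma arc_count (hT : IsTriangulation m T) :
    ∀ s a b, a < b → b ≤ m - 1 → b - a ≤ s → BdP T a b →
    (Farc T a b).card = b - a - 2 := by
  classical
  intro s
  induction s with
  | zero => intro a b h1 _ h3 _; omega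
  | succ s ih =>
    intro a b hab hbm hs hbd
    by_cases hsmall : b - a ≤ 2
    · have : Farc T a b = ∅ := by
        apply Finset.filter_false_of_mem
        intro p hp
        have := mem_bounds hT hp
        rintro ⟨h1, h2, h3⟩
        omega
      rw [this]; simp; omega
    · push_neg at hsmall
      -- choose d
      obtain ⟨d, hdb, had, hdT, hdmax⟩ :
          ∃ d, d < b ∧ a < d ∧ (MemT T a d ∨ d = a + 1) ∧
            (∀ z, z < b → a < z → MemT T a z → z ≤ d) := by
        classical
        set dSet : Finset ℕ :=
          (Finset.range b).filter (fun z => a < z ∧ (MemT T a z ∨ z = a + 1)) with hdSet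
        have hne : dSet.Nonempty := ⟨a + 1, by simp [hdSet]; omega⟩
        refine ⟨dSet.max' hne, ?_, ?_, ?_, ?_⟩
        · have := dSet.max'_mem hne
          simp only [hdSet, Finset.mem_filter, Finset.mem_range] at this
          exact this.1
        · have := dSet.max'_mem hne
          simp only [hdSet, Finset.mem_filter, Finset.mem_range] at this
          exact this.2.1
        · have := dSet.max'_mem hne
          simp only [hdSet, Finset.mem_filter, Finset.mem_range] at this
          exact this.2.2
        · intro z h1 h2 h3
          exact dSet.le_max' z (by simp [hdSet]; exact ⟨h1, h2, Or.inl h3⟩)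
      -- (d, b) is in T or hull edge
      have hDB : MemT T d b ∨ d = b - 1 := by
        by_cases hbb : d = b - 1
        · exact Or.inr hbb
        · left
          by_contra hnM
          obtain ⟨p, hp, hpat⟩ := exists_cross hT (x := d) (y := b) (by omega)
            (by omega) (by omega) hnM
          have hpb := mem_bounds hT hp
          rcases hpat with ⟨h1, h2, h3⟩ | ⟨h1, h2, h3⟩
          · have hbd2 := hbd p hp (Or.inr ⟨by omega, by omega⟩)
            rcases Nat.eq_or_lt_of_le hbd2.1 with he | hlt
            · have hMT : MemT T a (p.2:ℕ) := ⟨p, hp, by omega, rfl⟩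
              have := hdmax _ (by omega) (by omega) hMT
              omega
            · rcases hdT with hM | hM
              · exact noncross' hT hM ⟨p, hp, rfl, rfl⟩ (by omega)
              · omega
          · have := hbd p hp (Or.inl ⟨by omega, by omega⟩)
            omega
      -- split
      have hsplit : Farc T a b = Garc T a d ∪ Garc T d b := by
        ext p
        simp only [Farc, Garc, Finset.mem_filter, Finset.mem_union]
        constructor
        · rintro ⟨hp, h1, h2, h3⟩
          by_cases hc : (p.2:ℕ) ≤ d
          · exact Or.inl ⟨hp, h1, hc⟩
          · push_neg at hc
            right
            refine ⟨hp, ?_, h2⟩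
            by_contra hlt
            push_neg at hlt
            rcases Nat.eq_or_lt_of_le h1 with he | hgt
            · have hMT : MemT T a (p.2:ℕ) := ⟨p, hp, by omega, rfl⟩
              have h2b : (p.2:ℕ) < b := by
                rcases Nat.eq_or_lt_of_le h2 with hb2 | hb2
                · exfalso; exact h3 ⟨by omega, by omega⟩
                · omega
              have := hdmax _ h2b (by omega) hMT
              omega
            · rcases hdT with hM | hM
              · exact noncross' hT hM ⟨p, hp, rfl, rfl⟩ (by omega)
              · omega
        · rintro (⟨hp, h1, h2⟩ | ⟨hp, h1, h2⟩)
          · have := mem_bounds hT hp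
            exact ⟨hp, h1, by omega, by omega⟩
          · have := mem_bounds hT hp
            exact ⟨hp, by omega, h2, by omega⟩
      have hdisj : Disjoint (Garc T a d) (Garc T d b) := by
        rw [Finset.disjoint_left]
        intro p h1 h2
        simp only [Garc, Finset.mem_filter] at h1 h2
        have := mem_bounds hT h1.1
        omega
      -- cards of the two pieces
      have hGad : (Garc T a d).card = d - a - 1 := by
        rcases hdT with hM | hM
        · have hb := memT_bounds hT hM
          rw [garc_card_of_memT hM,
            ih a d (by omega) (by omega) (by omega) (bd_of_memT hT hM)]
          omega
        · have hnM : ¬ MemT T a d := by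
            intro hM2
            have := memT_bounds hT hM2
            omega
          rw [garc_card_of_not hnM, ih a d (by omega) (by omega) (by omega) (bd_hull (by omega))]
          omega
      have hGdb : (Garc T d b).card = b - d - 1 := by
        rcases hDB with hM | hM
        · have hb := memT_bounds hT hM
          rw [garc_card_of_memT hM,
            ih d b (by omega) (by omega) (by omega) (bd_of_memT hT hM)]
          omega
        · have hnM : ¬ MemT T d b := by
            intro hM2
            have := memT_bounds hT hM2
            omega
          rw [garc_card_of_not hnM, ih d b (by omega) (by omega) (by omega) (bd_hull (by omega))]
          omega
      rw [hsplit, Finset.card_union_of_disjoint hdisj, hGad, hGdb]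
      omega

lemma card_T (hm : 6 ≤ m) (hT : IsTriangulation m T) : T.card = m - 3 := by
  classical
  have hF : Farc T 0 (m - 1) = T := by
    apply Finset.filter_true_of_mem
    intro p hp
    have := mem_bounds hT hp
    omega
  have := arc_count hT (m - 1) 0 (m - 1) (by omega) le_rfl (by omega) (bd_full (by omega))
  rw [hF] at this
  omega

end Count
section Ears

variable {m : ℕ} {T : Finset (Fin m × Fin m)}

lemma sum_deg (hT : IsTriangulation m T) : ∑ i : Fin m, degT T i = 2 * T.card := by
  unfold degT
  have h1 : ∀ i : Fin m, (T.filter (fun p => p.1 = i ∨ p.2 = i)).card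
      = ∑ p ∈ T, if p.1 = i ∨ p.2 = i then 1 else 0 := fun i => Finset.card_filter _ _
  rw [Finset.sum_congr rfl (fun i _ => h1 i), Finset.sum_comm]
  have h2 : ∀ p ∈ T, (∑ i : Fin m, if p.1 = i ∨ p.2 = i then 1 else 0) = 2 := by
    intro p hp
    have hb := mem_bounds hT hp
    have hne : p.1 ≠ p.2 := by
      intro h
      rw [h] at hb
      omega
    rw [← Finset.card_filter]
    have : (Finset.univ.filter (fun i => p.1 = i ∨ p.2 = i)) = {p.1, p.2} := by
      ext i
      simp [eq_comm]
    rw [this, Finset.card_pair hne]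
  rw [Finset.sum_congr rfl h2, Finset.sum_const, smul_eq_mul]
  omega

lemma deg_zero_of_only (hT : IsTriangulation m T) {x : ℕ} (hx : x < m)
    (h : ∀ p ∈ T, (p.1:ℕ) ≠ x ∧ (p.2:ℕ) ≠ x) : degT T (⟨x, hx⟩ : Fin m) = 0 := by
  unfold degT
  rw [Finset.card_eq_zero, Finset.filter_eq_empty_iff]
  intro p hp
  rintro (hh | hh)
  · exact (h p hp).1 (by rw [hh])
  · exact (h p hp).2 (by rw [hh])

lemma inside_ear (hT : IsTriangulation m T) :
    ∀ s a b, b - a ≤ s → MemT T a b →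
      ∃ v : Fin m, a < (v:ℕ) ∧ (v:ℕ) < b ∧ degT T v = 0 := by
  intro s
  induction s with
  | zero =>
    intro a b hs hM
    have := memT_bounds hT hM
    omega
  | succ s ih =>
    intro a b hs hM
    have hb := memT_bounds hT hM
    by_cases hsm : b = a + 2
    · refine ⟨⟨a + 1, by omega⟩, by simp, by simp; omega, ?_⟩
      apply deg_zero_of_only hT
      intro p hp
      have hpb := mem_bounds hT hp
      have hpM : MemT T (p.1:ℕ) (p.2:ℕ) := ⟨p, hp, rfl, rfl⟩
      constructor
      · intro h1
        exact noncross' hT hM hpM (by omega)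
      · intro h2
        exact noncross' hT hpM hM (by omega)
    · by_cases hM2 : MemT T (a + 1) b
      · obtain ⟨v, h1, h2, h3⟩ := ih (a + 1) b (by omega) hM2
        exact ⟨v, by omega, h2, h3⟩
      · obtain ⟨p, hp, hpat⟩ := exists_cross hT (x := a + 1) (y := b) (by omega) (by omega)
          (by omega) hM2
        have hpb := mem_bounds hT hp
        rcases hpat with ⟨h1, h2, h3⟩ | ⟨h1, h2, h3⟩
        · have hbd := bd_of_memT hT hM p hp (Or.inr ⟨by omega, by omega⟩)
          have hp1 : (p.1:ℕ) = a := by omega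
          have hM3 : MemT T a (p.2:ℕ) := ⟨p, hp, hp1, rfl⟩
          obtain ⟨v, g1, g2, g3⟩ := ih a (p.2:ℕ) (by omega) hM3
          exact ⟨v, g1, by omega, g3⟩
        · have hbd := bd_of_memT hT hM p hp (Or.inl ⟨by omega, by omega⟩)
          omega

lemma outside_ear (hT : IsTriangulation m T) (hm : 6 ≤ m) :
    ∀ s a b, a + (m - 1 - b) ≤ s → MemT T a b →
      ∃ v : Fin m, ((v:ℕ) < a ∨ b < (v:ℕ)) ∧ degT T v = 0 := by
  intro s
  induction s with
  | zero =>
    intro a b hs hM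
    have hb := memT_bounds hT hM
    -- a = 0 and b = m - 1 : impossible by wrap condition
    omega
  | succ s ih =>
    intro a b hs hM
    have hb := memT_bounds hT hM
    by_cases hc1 : a = 0 ∧ b = m - 2
    · refine ⟨⟨m - 1, by omega⟩, by simp; omega, ?_⟩
      apply deg_zero_of_only hT
      intro p hp
      have hpb := mem_bounds hT hp
      have hpM : MemT T (p.1:ℕ) (p.2:ℕ) := ⟨p, hp, rfl, rfl⟩
      constructor
      · omega
      · intro h2
        exact noncross' hT hM hpM (by omega)
    · by_cases hc2 : a = 1 ∧ b = m - 1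
      · refine ⟨⟨0, by omega⟩, by simp; omega, ?_⟩
        apply deg_zero_of_only hT
        intro p hp
        have hpb := mem_bounds hT hp
        have hpM : MemT T (p.1:ℕ) (p.2:ℕ) := ⟨p, hp, rfl, rfl⟩
        constructor
        · intro h1
          exact noncross' hT hpM hM (by omega)
        · omega
      · by_cases hc3 : b ≤ m - 2
        · -- try (a, b+1)
          by_cases hM2 : MemT T a (b + 1)
          · obtain ⟨v, h1, h2⟩ := ih a (b + 1) (by omega) hM2
            exact ⟨v, by omega, h2⟩
          · obtain ⟨p, hp, hpat⟩ := exists_cross hT (x := a) (y := b + 1) (by omega) (by omega)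
              (by omega) hM2
            have hpb := mem_bounds hT hp
            have hpM : MemT T (p.1:ℕ) (p.2:ℕ) := ⟨p, hp, rfl, rfl⟩
            rcases hpat with ⟨h1, h2, h3⟩ | ⟨h1, h2, h3⟩
            · -- p1 < a < p2 ≤ b
              have hp2 : (p.2:ℕ) = b := by
                by_contra hh
                exact noncross' hT hpM hM (by omega)
              have hM3 : MemT T (p.1:ℕ) b := ⟨p, hp, rfl, hp2⟩
              obtain ⟨v, g1, g2⟩ := ih (p.1:ℕ) b (by omega) hM3
              exact ⟨v, by omega, g2⟩
            · -- a < p1 ≤ b < b+1 < p2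
              have hp1 : (p.1:ℕ) = b := by
                by_contra hh
                exact noncross' hT hM hpM (by omega)
              have hM3 : MemT T b (p.2:ℕ) := ⟨p, hp, hp1, rfl⟩
              obtain ⟨v, g1, g2, g3⟩ := inside_ear hT ((p.2:ℕ) - b) b (p.2:ℕ) (by omega) hM3
              exact ⟨v, by omega, g3⟩
        · -- b = m - 1, a ≥ 2; try (a-1, b)
          have hbm : b = m - 1 := by omega
          have ha2 : 2 ≤ a := by omega
          by_cases hM2 : MemT T (a - 1) b
          · obtain ⟨v, h1, h2⟩ := ih (a - 1) b (by omega) hM2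
            exact ⟨v, by omega, h2⟩
          · obtain ⟨p, hp, hpat⟩ := exists_cross hT (x := a - 1) (y := b) (by omega) (by omega)
              (by omega) hM2
            have hpb := mem_bounds hT hp
            have hpM : MemT T (p.1:ℕ) (p.2:ℕ) := ⟨p, hp, rfl, rfl⟩
            rcases hpat with ⟨h1, h2, h3⟩ | ⟨h1, h2, h3⟩
            · -- p1 < a-1, a-1 < p2 < b
              have hp2 : (p.2:ℕ) = a := by
                by_contra hh
                exact noncross' hT hpM hM (by omega)
              have hM3 : MemT T (p.1:ℕ) a := ⟨p, hp, rfl, hp2⟩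
              obtain ⟨v, g1, g2, g3⟩ := inside_ear hT (a - (p.1:ℕ)) (p.1:ℕ) a (by omega) hM3
              exact ⟨v, by omega, g3⟩
            · omega

lemma two_ears (hT : IsTriangulation m T) (hm : 6 ≤ m) :
    2 ≤ (Finset.univ.filter (fun i : Fin m => degT T i = 0)).card := by
  have hcard := card_T hm hT
  have hne : T.Nonempty := by
    rw [← Finset.card_pos]
    omega
  obtain ⟨p, hp⟩ := hne
  have hpM : MemT T (p.1:ℕ) (p.2:ℕ) := ⟨p, hp, rfl, rfl⟩
  have hpb := mem_bounds hT hp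
  obtain ⟨v, hv1, hv2, hv3⟩ := inside_ear hT ((p.2:ℕ) - p.1) (p.1:ℕ) (p.2:ℕ) le_rfl hpM
  obtain ⟨w, hw1, hw2⟩ := outside_ear hT hm ((p.1:ℕ) + (m - 1 - (p.2:ℕ))) (p.1:ℕ) (p.2:ℕ)
    le_rfl hpM
  have hvw : v ≠ w := by
    intro h
    rw [h] at hv1 hv2
    omega
  apply Finset.one_lt_card.2
  exact ⟨v, Finset.mem_filter.2 ⟨Finset.mem_univ _, hv3⟩,
    w, Finset.mem_filter.2 ⟨Finset.mem_univ _, hw2⟩, hvw⟩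

end Ears
section Local

variable {m : ℕ} {T : Finset (Fin m × Fin m)}

def nxt {m : ℕ} (v : Fin m) : Fin m :=
  if h : (v:ℕ) + 1 < m then ⟨(v:ℕ) + 1, h⟩ else ⟨0, v.pos⟩

def prv {m : ℕ} (v : Fin m) : Fin m :=
  if h : 0 < (v:ℕ) then ⟨(v:ℕ) - 1, by omega⟩ else ⟨m - 1, by have := v.pos; omega⟩

lemma nxt_val {v : Fin m} : ((nxt v):ℕ) = if (v:ℕ) + 1 = m then 0 else (v:ℕ) + 1 := by
  have hv := v.isLt
  unfold nxt
  split
  · rw [if_neg (by omega)]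
  · rw [if_pos (by omega)]

lemma prv_val {v : Fin m} : ((prv v):ℕ) = if (v:ℕ) = 0 then m - 1 else (v:ℕ) - 1 := by
  have hv := v.isLt
  unfold prv
  split
  · rw [if_neg (by omega)]
  · rw [if_pos (by omega)]

lemma deg_one_unique' (hT : IsTriangulation m T) {i : Fin m} (hd : degT T i = 1)
    {x y x' y' : ℕ} (h : MemT T x y) (h' : MemT T x' y')
    (hi : (i:ℕ) = x ∨ (i:ℕ) = y) (hi' : (i:ℕ) = x' ∨ (i:ℕ) = y') : x = x' ∧ y = y' := by
  by_contra hc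
  have h2 := deg_two hT h h' (fun hh => hc (by omega)) hi hi'
  omega

/-- the diagonal cut off by an ear, in the three positional situations -/
lemma ear_diag (hT : IsTriangulation m T) (hm : 6 ≤ m) {v : Fin m} (hd : degT T v = 0) :
    ((1 ≤ (v:ℕ) ∧ (v:ℕ) ≤ m - 2) → MemT T ((v:ℕ) - 1) ((v:ℕ) + 1)) ∧
    ((v:ℕ) = 0 → MemT T 1 (m - 1)) ∧
    ((v:ℕ) = m - 1 → MemT T 0 (m - 2)) := by
  have hv := v.isLt
  have hvv : (⟨(v:ℕ), hv⟩ : Fin m) = v := rfl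
  refine ⟨?_, ?_, ?_⟩
  · rintro ⟨h1, h2⟩
    by_contra hnM
    obtain ⟨p, hp, hpat⟩ := exists_cross hT (x := (v:ℕ) - 1) (y := (v:ℕ) + 1)
      (by omega) (by omega) (by omega) hnM
    have hz := deg_zero hd hp
    omega
  · intro h0
    by_contra hnM
    obtain ⟨p, hp, hpat⟩ := exists_cross hT (x := 1) (y := m - 1)
      (by omega) (by omega) (by omega) hnM
    have hz := deg_zero hd hp
    have := mem_bounds hT hp
    omega
  · intro h0
    by_contra hnM
    obtain ⟨p, hp, hpat⟩ := exists_cross hT (x := 0) (y := m - 2)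
      (by omega) (by omega) (by omega) hnM
    have hz := deg_zero hd hp
    have := mem_bounds hT hp
    omega

/-- no two cyclically-adjacent ears -/
lemma no_adj_ears (hT : IsTriangulation m T) (hm : 6 ≤ m) {v : Fin m}
    (h0 : degT T v = 0) (h1 : degT T (nxt v) = 0) : False := by
  have hv := v.isLt
  have hnv := nxt_val (v := v)
  have Ev := ear_diag hT hm h0
  have En := ear_diag hT hm h1
  by_cases hc : (v:ℕ) = 0
  · rw [if_neg (by omega)] at hnv
    have hDv := Ev.2.1 hc
    have hDn := En.1 (by omega)
    rw [show ((nxt v):ℕ) - 1 = 0 by omega, show ((nxt v):ℕ) + 1 = 2 by omega] at hDn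
    exact noncross' hT hDn hDv (by omega)
  by_cases hc2 : (v:ℕ) = m - 2
  · rw [if_neg (by omega)] at hnv
    have hDv := Ev.1 (by omega)
    have hDn := En.2.2 (by omega)
    rw [show ((v:ℕ)) - 1 = m - 3 by omega, show ((v:ℕ)) + 1 = m - 1 by omega] at hDv
    exact noncross' hT hDn hDv (by omega)
  by_cases hc3 : (v:ℕ) = m - 1
  · rw [if_pos (by omega)] at hnv
    have hDv := Ev.2.2 hc3
    have hDn := En.2.1 (by omega)
    exact noncross' hT hDv hDn (by omega)
  · rw [if_neg (by omega)] at hnv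
    have hDv := Ev.1 (by omega)
    have hDn := En.1 (by omega)
    rw [show ((nxt v):ℕ) - 1 = (v:ℕ) by omega,
      show ((nxt v):ℕ) + 1 = (v:ℕ) + 2 by omega] at hDn
    exact noncross' hT hDv hDn (by omega)

end Local
section Local2

variable {m : ℕ} {T : Finset (Fin m × Fin m)}

/-- a degree-1 vertex cannot have two ear neighbours -/
lemma no_ear_sandwich (hT : IsTriangulation m T) (hm : 6 ≤ m) {v : Fin m}
    (h1 : degT T v = 1) (hp : degT T (prv v) = 0) (hn : degT T (nxt v) = 0) : False := by
  have hv := v.isLt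
  have hnv := nxt_val (v := v)
  have hpv := prv_val (v := v)
  have Ep := ear_diag hT hm hp
  have En := ear_diag hT hm hn
  by_cases hc0 : (v:ℕ) = 0
  · rw [if_pos (by omega)] at hpv
    rw [if_neg (by omega)] at hnv
    have hD1 := Ep.2.2 (by omega)
    have hD2 := En.1 (by omega)
    rw [show ((nxt v):ℕ) - 1 = 0 by omega, show ((nxt v):ℕ) + 1 = 2 by omega] at hD2
    have := deg_one_unique' hT h1 hD1 hD2 (Or.inl (by omega)) (Or.inl (by omega))
    omega
  by_cases hc1 : (v:ℕ) = 1
  · rw [if_neg (by omega)] at hpv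
    rw [if_neg (by omega)] at hnv
    have hD1 := Ep.2.1 (by omega)
    have hD2 := En.1 (by omega)
    rw [show ((nxt v):ℕ) - 1 = 1 by omega, show ((nxt v):ℕ) + 1 = 3 by omega] at hD2
    have := deg_one_unique' hT h1 hD1 hD2 (Or.inl (by omega)) (Or.inl (by omega))
    omega
  by_cases hc2 : (v:ℕ) = m - 2
  · rw [if_neg (by omega)] at hpv
    rw [if_neg (by omega)] at hnv
    have hD1 := Ep.1 (by omega)
    rw [show ((prv v):ℕ) - 1 = m - 4 by omega, show ((prv v):ℕ) + 1 = m - 2 by omega] at hD1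
    have hD2 := En.2.2 (by omega)
    have := deg_one_unique' hT h1 hD1 hD2 (Or.inr (by omega)) (Or.inr (by omega))
    omega
  by_cases hc3 : (v:ℕ) = m - 1
  · rw [if_pos (by omega)] at hnv
    rw [if_neg (by omega)] at hpv
    have hD1 := Ep.1 (by omega)
    rw [show ((prv v):ℕ) - 1 = m - 3 by omega, show ((prv v):ℕ) + 1 = m - 1 by omega] at hD1
    have hD2 := En.2.1 (by omega)
    have := deg_one_unique' hT h1 hD1 hD2 (Or.inr (by omega)) (Or.inr (by omega))
    omega
  · rw [if_neg (by omega)] at hpv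
    rw [if_neg (by omega)] at hnv
    have hD1 := Ep.1 (by omega)
    rw [show ((prv v):ℕ) - 1 = (v:ℕ) - 2 by omega,
      show ((prv v):ℕ) + 1 = (v:ℕ) by omega] at hD1
    have hD2 := En.1 (by omega)
    rw [show ((nxt v):ℕ) - 1 = (v:ℕ) by omega,
      show ((nxt v):ℕ) + 1 = (v:ℕ) + 2 by omega] at hD2
    have := deg_one_unique' hT h1 hD1 hD2 (Or.inr (by omega)) (Or.inl (by omega))
    omega

/-- no pattern: ear, deg-1, deg-1, ear -/
lemma no_double_one (hT : IsTriangulation m T) (hm : 6 ≤ m) {v : Fin m}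
    (h0 : degT T v = 0) (h1 : degT T (nxt v) = 1) (h2 : degT T (nxt (nxt v)) = 1)
    (h3 : degT T (nxt (nxt (nxt v))) = 0) : False := by
  have hv := v.isLt
  have hnv := nxt_val (v := v)
  have hnv2 := nxt_val (v := nxt v)
  have hnv3 := nxt_val (v := nxt (nxt v))
  have Ev := ear_diag hT hm h0
  have E3 := ear_diag hT hm h3
  by_cases hcA : (v:ℕ) = 0
  · rw [if_neg (by omega)] at hnv
    rw [if_neg (by omega)] at hnv2
    rw [if_neg (by omega)] at hnv3
    have hDv := Ev.2.1 (by omega)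
    have hD3 := E3.1 (by omega)
    rw [show ((nxt (nxt (nxt v))):ℕ) - 1 = 2 by omega,
      show ((nxt (nxt (nxt v))):ℕ) + 1 = 4 by omega] at hD3
    have hq : ¬ MemT T 2 (m - 1) := by
      intro hM
      have := deg_one_unique' hT h2 hM hD3 (Or.inl (by omega)) (Or.inl (by omega))
      omega
    obtain ⟨p, hpT, hpat⟩ := exists_cross hT (x := 2) (y := m - 1) (by omega) (by omega)
      (by omega) hq
    have hpM : MemT T (p.1:ℕ) (p.2:ℕ) := ⟨p, hpT, rfl, rfl⟩
    have hzv := deg_zero h0 hpT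
    have hpb := mem_bounds hT hpT
    rcases hpat with ⟨a1, a2, a3⟩ | ⟨a1, a2, a3⟩
    · rcases (by omega : (p.1:ℕ) = 0 ∨ (p.1:ℕ) = 1) with hh | hh
      · omega
      · have := deg_one_unique' hT h1 hpM hDv (Or.inl (by omega)) (Or.inl (by omega))
        omega
    · omega
  by_cases hcB : (v:ℕ) = m - 1
  · rw [if_pos (by omega)] at hnv
    rw [if_neg (by omega)] at hnv2
    rw [if_neg (by omega)] at hnv3
    have hDv := Ev.2.2 (by omega)
    have hD3 := E3.1 (by omega)
    rw [show ((nxt (nxt (nxt v))):ℕ) - 1 = 1 by omega,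
      show ((nxt (nxt (nxt v))):ℕ) + 1 = 3 by omega] at hD3
    have hq : ¬ MemT T 1 (m - 2) := by
      intro hM
      have := deg_one_unique' hT h2 hM hD3 (Or.inl (by omega)) (Or.inl (by omega))
      omega
    obtain ⟨p, hpT, hpat⟩ := exists_cross hT (x := 1) (y := m - 2) (by omega) (by omega)
      (by omega) hq
    have hpM : MemT T (p.1:ℕ) (p.2:ℕ) := ⟨p, hpT, rfl, rfl⟩
    have hzv := deg_zero h0 hpT
    have hpb := mem_bounds hT hpT
    rcases hpat with ⟨a1, a2, a3⟩ | ⟨a1, a2, a3⟩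
    · have hh : (p.1:ℕ) = 0 := by omega
      have := deg_one_unique' hT h1 hpM hDv (Or.inl (by omega)) (Or.inl (by omega))
      omega
    · omega
  by_cases hcC : (v:ℕ) = m - 2
  · rw [if_neg (by omega)] at hnv
    rw [if_pos (by omega)] at hnv2
    rw [if_neg (by omega)] at hnv3
    have hDv := Ev.1 (by omega)
    rw [show (v:ℕ) - 1 = m - 3 by omega, show (v:ℕ) + 1 = m - 1 by omega] at hDv
    have hD3 := E3.1 (by omega)
    rw [show ((nxt (nxt (nxt v))):ℕ) - 1 = 0 by omega,
      show ((nxt (nxt (nxt v))):ℕ) + 1 = 2 by omega] at hD3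
    have hq : ¬ MemT T 0 (m - 3) := by
      intro hM
      have := deg_one_unique' hT h2 hM hD3 (Or.inl (by omega)) (Or.inl (by omega))
      omega
    obtain ⟨p, hpT, hpat⟩ := exists_cross hT (x := 0) (y := m - 3) (by omega) (by omega)
      (by omega) hq
    have hpM : MemT T (p.1:ℕ) (p.2:ℕ) := ⟨p, hpT, rfl, rfl⟩
    have hzv := deg_zero h0 hpT
    have hpb := mem_bounds hT hpT
    rcases hpat with ⟨a1, a2, a3⟩ | ⟨a1, a2, a3⟩
    · omega
    · rcases (by omega : (p.2:ℕ) = m - 2 ∨ (p.2:ℕ) = m - 1) with hh | hh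
      · omega
      · have := deg_one_unique' hT h1 hpM hDv (Or.inr (by omega)) (Or.inr (by omega))
        omega
  by_cases hcD : (v:ℕ) = m - 3
  · rw [if_neg (by omega)] at hnv
    rw [if_neg (by omega)] at hnv2
    rw [if_pos (by omega)] at hnv3
    have hDv := Ev.1 (by omega)
    rw [show (v:ℕ) - 1 = m - 4 by omega, show (v:ℕ) + 1 = m - 2 by omega] at hDv
    have hD3 := E3.2.1 (by omega)
    have hq : ¬ MemT T (m - 4) (m - 1) := by
      intro hM
      have := deg_one_unique' hT h2 hM hD3 (Or.inr (by omega)) (Or.inr (by omega))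
      omega
    obtain ⟨p, hpT, hpat⟩ := exists_cross hT (x := m - 4) (y := m - 1) (by omega) (by omega)
      (by omega) hq
    have hpM : MemT T (p.1:ℕ) (p.2:ℕ) := ⟨p, hpT, rfl, rfl⟩
    have hzv := deg_zero h0 hpT
    have hpb := mem_bounds hT hpT
    rcases hpat with ⟨a1, a2, a3⟩ | ⟨a1, a2, a3⟩
    · rcases (by omega : (p.2:ℕ) = m - 3 ∨ (p.2:ℕ) = m - 2) with hh | hh
      · omega
      · have := deg_one_unique' hT h1 hpM hDv (Or.inr (by omega)) (Or.inr (by omega))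
        omega
    · omega
  by_cases hcE : (v:ℕ) = m - 4
  · rw [if_neg (by omega)] at hnv
    rw [if_neg (by omega)] at hnv2
    rw [if_neg (by omega)] at hnv3
    have hDv := Ev.1 (by omega)
    rw [show (v:ℕ) - 1 = m - 5 by omega, show (v:ℕ) + 1 = m - 3 by omega] at hDv
    have hD3 := E3.2.2 (by omega)
    have hq : ¬ MemT T (m - 5) (m - 2) := by
      intro hM
      have := deg_one_unique' hT h2 hM hD3 (Or.inr (by omega)) (Or.inr (by omega))
      omega
    obtain ⟨p, hpT, hpat⟩ := exists_cross hT (x := m - 5) (y := m - 2) (by omega) (by omega)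
      (by omega) hq
    have hpM : MemT T (p.1:ℕ) (p.2:ℕ) := ⟨p, hpT, rfl, rfl⟩
    have hzv := deg_zero h0 hpT
    have hpb := mem_bounds hT hpT
    rcases hpat with ⟨a1, a2, a3⟩ | ⟨a1, a2, a3⟩
    · rcases (by omega : (p.2:ℕ) = m - 4 ∨ (p.2:ℕ) = m - 3) with hh | hh
      · omega
      · have := deg_one_unique' hT h1 hpM hDv (Or.inr (by omega)) (Or.inr (by omega))
        omega
    · rcases (by omega : (p.1:ℕ) = m - 4 ∨ (p.1:ℕ) = m - 3) with hh | hh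
      · omega
      · have := deg_one_unique' hT h1 hpM hDv (Or.inl (by omega)) (Or.inr (by omega))
        omega
  · -- generic : 1 ≤ v ≤ m - 5
    rw [if_neg (by omega)] at hnv
    rw [if_neg (by omega)] at hnv2
    rw [if_neg (by omega)] at hnv3
    have hDv := Ev.1 (by omega)
    have hD3 := E3.1 (by omega)
    rw [show ((nxt (nxt (nxt v))):ℕ) - 1 = (v:ℕ) + 2 by omega,
      show ((nxt (nxt (nxt v))):ℕ) + 1 = (v:ℕ) + 4 by omega] at hD3
    have hq : ¬ MemT T ((v:ℕ) - 1) ((v:ℕ) + 2) := by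
      intro hM
      have := deg_one_unique' hT h2 hM hD3 (Or.inr (by omega)) (Or.inl (by omega))
      omega
    obtain ⟨p, hpT, hpat⟩ := exists_cross hT (x := (v:ℕ) - 1) (y := (v:ℕ) + 2) (by omega)
      (by omega) (by omega) hq
    have hpM : MemT T (p.1:ℕ) (p.2:ℕ) := ⟨p, hpT, rfl, rfl⟩
    have hzv := deg_zero h0 hpT
    have hpb := mem_bounds hT hpT
    rcases hpat with ⟨a1, a2, a3⟩ | ⟨a1, a2, a3⟩
    · rcases (by omega : (p.2:ℕ) = (v:ℕ) ∨ (p.2:ℕ) = (v:ℕ) + 1) with hh | hh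
      · omega
      · have := deg_one_unique' hT h1 hpM hDv (Or.inr (by omega)) (Or.inr (by omega))
        omega
    · rcases (by omega : (p.1:ℕ) = (v:ℕ) ∨ (p.1:ℕ) = (v:ℕ) + 1) with hh | hh
      · omega
      · have := deg_one_unique' hT h1 hpM hDv (Or.inl (by omega)) (Or.inr (by omega))
        omega

end Local2
section Pay

variable {m : ℕ} {T : Finset (Fin m × Fin m)}

lemma nxt_spec (v : Fin m) :
    ((nxt v):ℕ) = (v:ℕ) + 1 ∨ ((v:ℕ) = m - 1 ∧ ((nxt v):ℕ) = 0) := by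
  have hv := v.isLt
  have := nxt_val (v := v)
  by_cases h : (v:ℕ) + 1 = m
  · rw [if_pos h] at this
    right
    omega
  · rw [if_neg h] at this
    left
    omega

lemma prv_spec (v : Fin m) :
    ((prv v):ℕ) + 1 = (v:ℕ) ∨ ((v:ℕ) = 0 ∧ ((prv v):ℕ) = m - 1) := by
  have hv := v.isLt
  have := prv_val (v := v)
  by_cases h : (v:ℕ) = 0
  · rw [if_pos h] at this
    right
    omega
  · rw [if_neg h] at this
    left
    omega

/-- payments from `u` to an ear `v` -/
def pay (T : Finset (Fin m × Fin m)) (u v : Fin m) : ℕ :=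
  if degT T v = 0 ∧ (u = nxt v ∨ u = prv v) ∧ 2 ≤ degT T u then 3
  else if degT T v = 0 ∧ (u = nxt v ∨ u = prv v) ∧ degT T u = 1 then 2
  else if degT T v = 0 ∧ ((u = nxt (nxt v) ∧ degT T (nxt v) = 1) ∨
      (u = prv (prv v) ∧ degT T (prv v) = 1)) then 1
  else 0

lemma pay_le_three (u v : Fin m) : pay T u v ≤ 3 := by
  unfold pay
  split_ifs <;> omega

lemma ear_nbrs (hT : IsTriangulation m T) (hm : 6 ≤ m) {v : Fin m} (h0 : degT T v = 0) :
    1 ≤ degT T (nxt v) ∧ 1 ≤ degT T (prv v) := by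
  have hv := v.isLt
  have hs1 := nxt_spec (v := v)
  have hs2 := prv_spec (v := v)
  have Ev := ear_diag hT hm h0
  by_cases hc0 : (v:ℕ) = 0
  · have hD := Ev.2.1 hc0
    exact ⟨deg_pos_val hT hD (Or.inl (by omega)), deg_pos_val hT hD (Or.inr (by omega))⟩
  by_cases hc1 : (v:ℕ) = m - 1
  · have hD := Ev.2.2 hc1
    exact ⟨deg_pos_val hT hD (Or.inl (by omega)), deg_pos_val hT hD (Or.inr (by omega))⟩
  · have hD := Ev.1 (by omega)
    exact ⟨deg_pos_val hT hD (Or.inr (by omega)), deg_pos_val hT hD (Or.inl (by omega))⟩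

lemma income (hT : IsTriangulation m T) (hm : 6 ≤ m) {v : Fin m} (h0 : degT T v = 0) :
    6 ≤ ∑ u : Fin m, pay T u v := by
  have hv := v.isLt
  have s0 := nxt_spec (v := v)
  have s1 := prv_spec (v := v)
  have s2 := nxt_spec (v := nxt v)
  have s3 := prv_spec (v := prv v)
  have l0 := (nxt v).isLt
  have l1 := (prv v).isLt
  have l2 := (nxt (nxt v)).isLt
  have l3 := (prv (prv v)).isLt
  -- distinctness
  have d1 : nxt v ≠ prv v := fun h => by have := congrArg Fin.val h; omega
  have d2 : nxt v ≠ nxt (nxt v) := fun h => by have := congrArg Fin.val h; omega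
  have d3 : nxt v ≠ prv (prv v) := fun h => by have := congrArg Fin.val h; omega
  have d4 : prv v ≠ nxt (nxt v) := fun h => by have := congrArg Fin.val h; omega
  have d5 : prv v ≠ prv (prv v) := fun h => by have := congrArg Fin.val h; omega
  have d6 : nxt (nxt v) ≠ prv (prv v) := fun h => by have := congrArg Fin.val h; omega
  have dnb := ear_nbrs hT hm h0
  -- income from the nxt side
  have hside1 : 3 ≤ pay T (nxt v) v + pay T (nxt (nxt v)) v := by
    by_cases h2d : 2 ≤ degT T (nxt v)
    · have : pay T (nxt v) v = 3 := by
        unfold pay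
        rw [if_pos ⟨h0, Or.inl rfl, h2d⟩]
      omega
    · have hd1 : degT T (nxt v) = 1 := by omega
      have e1 : pay T (nxt v) v = 2 := by
        unfold pay
        rw [if_neg (by rintro ⟨_, _, hx⟩; omega), if_pos ⟨h0, Or.inl rfl, hd1⟩]
      have e2 : pay T (nxt (nxt v)) v = 1 := by
        unfold pay
        rw [if_neg (by rintro ⟨_, (h | h), _⟩; exacts [d2 h.symm, d4 h.symm]),
          if_neg (by rintro ⟨_, (h | h), _⟩; exacts [d2 h.symm, d4 h.symm]),
          if_pos ⟨h0, Or.inl ⟨rfl, hd1⟩⟩]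
      omega
  have hside2 : 3 ≤ pay T (prv v) v + pay T (prv (prv v)) v := by
    by_cases h2d : 2 ≤ degT T (prv v)
    · have : pay T (prv v) v = 3 := by
        unfold pay
        rw [if_pos ⟨h0, Or.inr rfl, h2d⟩]
      omega
    · have hd1 : degT T (prv v) = 1 := by omega
      have e1 : pay T (prv v) v = 2 := by
        unfold pay
        rw [if_neg (by rintro ⟨_, _, hx⟩; omega), if_pos ⟨h0, Or.inr rfl, hd1⟩]
      have e2 : pay T (prv (prv v)) v = 1 := by
        unfold pay
        rw [if_neg (by rintro ⟨_, (h | h), _⟩; exacts [d3 h.symm, d5 h.symm]),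
          if_neg (by rintro ⟨_, (h | h), _⟩; exacts [d3 h.symm, d5 h.symm]),
          if_pos ⟨h0, Or.inr ⟨rfl, hd1⟩⟩]
      omega
  have hsubset : ({nxt v, prv v, nxt (nxt v), prv (prv v)} : Finset (Fin m)) ⊆ Finset.univ :=
    Finset.subset_univ _
  have hsum : ∑ u ∈ ({nxt v, prv v, nxt (nxt v), prv (prv v)} : Finset (Fin m)), pay T u v
      ≤ ∑ u : Fin m, pay T u v := Finset.sum_le_sum_of_subset hsubset
  rw [Finset.sum_insert (by simp [d1, d2, d3]),
    Finset.sum_insert (by simp [d4, d5]),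
    Finset.sum_insert (by simp [d6]),
    Finset.sum_singleton] at hsum
  omega

end Pay
section Budget

variable {m : ℕ} {T : Finset (Fin m × Fin m)}

lemma prv_nxt (w : Fin m) : prv (nxt w) = w := by
  apply Fin.ext
  have h1 := nxt_spec (v := w)
  have h2 := prv_spec (v := nxt w)
  have := w.isLt
  have := (nxt w).isLt
  omega

lemma nxt_prv (w : Fin m) : nxt (prv w) = w := by
  apply Fin.ext
  have h1 := prv_spec (v := w)
  have h2 := nxt_spec (v := prv w)
  have := w.isLt
  have := (prv w).isLt
  omega

lemma ne_nxt1 (hm : 6 ≤ m) (u : Fin m) : u ≠ nxt u := by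
  intro h
  have := congrArg Fin.val h
  have s1 := nxt_spec (v := u)
  have := u.isLt
  omega

lemma ne_nxt2 (hm : 6 ≤ m) (u : Fin m) : u ≠ nxt (nxt u) := by
  intro h
  have := congrArg Fin.val h
  have s1 := nxt_spec (v := u)
  have s2 := nxt_spec (v := nxt u)
  have := u.isLt
  have := (nxt u).isLt
  omega

lemma ne_nxt3 (hm : 6 ≤ m) (u : Fin m) : u ≠ nxt (nxt (nxt u)) := by
  intro h
  have := congrArg Fin.val h
  have s1 := nxt_spec (v := u)
  have s2 := nxt_spec (v := nxt u)
  have s3 := nxt_spec (v := nxt (nxt u))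
  have := u.isLt
  have := (nxt u).isLt
  have := (nxt (nxt u)).isLt
  omega

lemma ne_nxt4 (hm : 6 ≤ m) (u : Fin m) : u ≠ nxt (nxt (nxt (nxt u))) := by
  intro h
  have := congrArg Fin.val h
  have s1 := nxt_spec (v := u)
  have s2 := nxt_spec (v := nxt u)
  have s3 := nxt_spec (v := nxt (nxt u))
  have s4 := nxt_spec (v := nxt (nxt (nxt u)))
  have := u.isLt
  have := (nxt u).isLt
  have := (nxt (nxt u)).isLt
  have := (nxt (nxt (nxt u))).isLt
  omega

lemma ne_prv1 (hm : 6 ≤ m) (u : Fin m) : u ≠ prv u := by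
  intro h
  have := congrArg Fin.val h
  have s1 := prv_spec (v := u)
  have := u.isLt
  omega

lemma ne_prv3 (hm : 6 ≤ m) (u : Fin m) : u ≠ prv (prv (prv u)) := by
  intro h
  have := congrArg Fin.val h
  have s1 := prv_spec (v := u)
  have s2 := prv_spec (v := prv u)
  have s3 := prv_spec (v := prv (prv u))
  have := u.isLt
  have := (prv u).isLt
  have := (prv (prv u)).isLt
  omega

lemma ne_prv4 (hm : 6 ≤ m) (u : Fin m) : u ≠ prv (prv (prv (prv u))) := by
  intro h
  have := congrArg Fin.val h
  have s1 := prv_spec (v := u)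
  have s2 := prv_spec (v := prv u)
  have s3 := prv_spec (v := prv (prv u))
  have s4 := prv_spec (v := prv (prv (prv u)))
  have := u.isLt
  have := (prv u).isLt
  have := (prv (prv u)).isLt
  have := (prv (prv (prv u))).isLt
  omega

def wgt (d : ℕ) : ℕ := if d = 0 then 0 else if d = 1 then 2 else 6

lemma pay_eq_zero (hm : 6 ≤ m) (u v : Fin m)
    (hvS : v ≠ nxt u ∧ v ≠ prv u ∧ v ≠ nxt (nxt u) ∧ v ≠ prv (prv u)) : pay T u v = 0 := by
  have hv := v.isLt
  have hu := u.isLt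
  have a1 := nxt_spec (v := v)
  have a2 := prv_spec (v := v)
  have a3 := nxt_spec (v := nxt v)
  have a4 := prv_spec (v := prv v)
  have a5 := nxt_spec (v := u)
  have a6 := prv_spec (v := u)
  have a7 := nxt_spec (v := nxt u)
  have a8 := prv_spec (v := prv u)
  have b0 := (nxt v).isLt
  have b1 := (prv v).isLt
  have b2 := (nxt u).isLt
  have b3 := (prv u).isLt
  have hc12 : ¬(u = nxt v ∨ u = prv v) := by
    rintro (h | h)
    · exact hvS.2.1 (Fin.ext (by have := congrArg Fin.val h; omega))
    · exact hvS.1 (Fin.ext (by have := congrArg Fin.val h; omega))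
  have hc3 : ¬(degT T v = 0 ∧ ((u = nxt (nxt v) ∧ degT T (nxt v) = 1) ∨
      (u = prv (prv v) ∧ degT T (prv v) = 1))) := by
    rintro ⟨_, (⟨h, _⟩ | ⟨h, _⟩)⟩
    · exact hvS.2.2.2 (Fin.ext (by have := congrArg Fin.val h; omega))
    · exact hvS.2.2.1 (Fin.ext (by have := congrArg Fin.val h; omega))
  unfold pay
  rw [if_neg (by rintro ⟨_, h, _⟩; exact hc12 h),
    if_neg (by rintro ⟨_, h, _⟩; exact hc12 h), if_neg hc3]

lemma pay_nxt_val (hm : 6 ≤ m) (u : Fin m) :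
    pay T u (nxt u) = if degT T (nxt u) = 0 ∧ 2 ≤ degT T u then 3
      else if degT T (nxt u) = 0 ∧ degT T u = 1 then 2 else 0 := by
  have i1 : prv (nxt u) = u := prv_nxt u
  have n3 := ne_nxt3 hm u
  have n4 := ne_prv1 hm u
  unfold pay
  have h3 : ¬(degT T (nxt u) = 0 ∧ ((u = nxt (nxt (nxt u)) ∧ degT T (nxt (nxt u)) = 1) ∨
      (u = prv (prv (nxt u)) ∧ degT T (prv (nxt u)) = 1))) := by
    rintro ⟨_, (⟨h, _⟩ | ⟨h, _⟩)⟩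
    · exact n3 h
    · rw [i1] at h
      exact n4 h
  by_cases c1 : degT T (nxt u) = 0 ∧ 2 ≤ degT T u
  · rw [if_pos ⟨c1.1, Or.inr i1.symm, c1.2⟩, if_pos c1]
  · rw [if_neg (by rintro ⟨a, _, b⟩; exact c1 ⟨a, b⟩), if_neg c1]
    by_cases c2 : degT T (nxt u) = 0 ∧ degT T u = 1
    · rw [if_pos ⟨c2.1, Or.inr i1.symm, c2.2⟩, if_pos c2]
    · rw [if_neg (by rintro ⟨a, _, b⟩; exact c2 ⟨a, b⟩), if_neg c2, if_neg h3]

lemma pay_prv_val (hm : 6 ≤ m) (u : Fin m) :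
    pay T u (prv u) = if degT T (prv u) = 0 ∧ 2 ≤ degT T u then 3
      else if degT T (prv u) = 0 ∧ degT T u = 1 then 2 else 0 := by
  have i2 : nxt (prv u) = u := nxt_prv u
  have n1 := ne_nxt1 hm u
  have n6 := ne_prv3 hm u
  unfold pay
  have h3 : ¬(degT T (prv u) = 0 ∧ ((u = nxt (nxt (prv u)) ∧ degT T (nxt (prv u)) = 1) ∨
      (u = prv (prv (prv u)) ∧ degT T (prv (prv u)) = 1))) := by
    rintro ⟨_, (⟨h, _⟩ | ⟨h, _⟩)⟩
    · rw [i2] at h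
      exact n1 h
    · exact n6 h
  by_cases c1 : degT T (prv u) = 0 ∧ 2 ≤ degT T u
  · rw [if_pos ⟨c1.1, Or.inl i2.symm, c1.2⟩, if_pos c1]
  · rw [if_neg (by rintro ⟨a, _, b⟩; exact c1 ⟨a, b⟩), if_neg c1]
    by_cases c2 : degT T (prv u) = 0 ∧ degT T u = 1
    · rw [if_pos ⟨c2.1, Or.inl i2.symm, c2.2⟩, if_pos c2]
    · rw [if_neg (by rintro ⟨a, _, b⟩; exact c2 ⟨a, b⟩), if_neg c2, if_neg h3]

lemma pay_nxt2_val (hm : 6 ≤ m) (u : Fin m) :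
    pay T u (nxt (nxt u)) = if degT T (nxt (nxt u)) = 0 ∧ degT T (nxt u) = 1
      then 1 else 0 := by
  have i1 : prv (nxt u) = u := prv_nxt u
  have j1 : prv (nxt (nxt u)) = nxt u := prv_nxt (nxt u)
  have n1 := ne_nxt1 hm u
  have n3 := ne_nxt3 hm u
  have n7 := ne_nxt4 hm u
  unfold pay
  have hstr : ¬(u = nxt (nxt (nxt u)) ∨ u = prv (nxt (nxt u))) := by
    rintro (h | h)
    · exact n3 h
    · rw [j1] at h
      exact n1 h
  rw [if_neg (by rintro ⟨_, h, _⟩; exact hstr h),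
    if_neg (by rintro ⟨_, h, _⟩; exact hstr h)]
  by_cases c : degT T (nxt (nxt u)) = 0 ∧ degT T (nxt u) = 1
  · rw [if_pos ⟨c.1, Or.inr ⟨by rw [j1, i1], by rw [j1]; exact c.2⟩⟩, if_pos c]
  · rw [if_neg ?_, if_neg c]
    rintro ⟨a, (⟨h, _⟩ | ⟨_, hd⟩)⟩
    · exact n7 h
    · rw [j1] at hd
      exact c ⟨a, hd⟩

lemma pay_prv2_val (hm : 6 ≤ m) (u : Fin m) :
    pay T u (prv (prv u)) = if degT T (prv (prv u)) = 0 ∧ degT T (prv u) = 1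
      then 1 else 0 := by
  have j2 : nxt (prv (prv u)) = prv u := nxt_prv (prv u)
  have k2 : nxt (nxt (prv (prv u))) = u := by rw [j2, nxt_prv u]
  have n4 := ne_prv1 hm u
  have n6 := ne_prv3 hm u
  have n8 := ne_prv4 hm u
  unfold pay
  have hstr : ¬(u = nxt (prv (prv u)) ∨ u = prv (prv (prv u))) := by
    rintro (h | h)
    · rw [j2] at h
      exact n4 h
    · exact n6 h
  rw [if_neg (by rintro ⟨_, h, _⟩; exact hstr h),
    if_neg (by rintro ⟨_, h, _⟩; exact hstr h)]
  by_cases c : degT T (prv (prv u)) = 0 ∧ degT T (prv u) = 1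
  · rw [if_pos ⟨c.1, Or.inl ⟨k2.symm, by rw [j2]; exact c.2⟩⟩, if_pos c]
  · rw [if_neg ?_, if_neg c]
    rintro ⟨a, (⟨_, hd⟩ | ⟨h, _⟩)⟩
    · rw [j2] at hd
      exact c ⟨a, hd⟩
    · exact n8 h

lemma sum_pay (hm : 6 ≤ m) (u : Fin m) :
    ∑ v : Fin m, pay T u v = pay T u (nxt u) + pay T u (prv u) +
      pay T u (nxt (nxt u)) + pay T u (prv (prv u)) := by
  classical
  have hvu := u.isLt
  have s0 := nxt_spec (v := u)
  have s1 := prv_spec (v := u)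
  have s2 := nxt_spec (v := nxt u)
  have s3 := prv_spec (v := prv u)
  have l0 := (nxt u).isLt
  have l1 := (prv u).isLt
  have l2 := (nxt (nxt u)).isLt
  have l3 := (prv (prv u)).isLt
  have d1 : nxt u ≠ prv u := fun h => by have := congrArg Fin.val h; omega
  have d2 : nxt u ≠ nxt (nxt u) := fun h => by have := congrArg Fin.val h; omega
  have d3 : nxt u ≠ prv (prv u) := fun h => by have := congrArg Fin.val h; omega
  have d4 : prv u ≠ nxt (nxt u) := fun h => by have := congrArg Fin.val h; omega
  have d5 : prv u ≠ prv (prv u) := fun h => by have := congrArg Fin.val h; omega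
  have d6 : nxt (nxt u) ≠ prv (prv u) := fun h => by have := congrArg Fin.val h; omega
  have hzero : ∀ v ∈ Finset.univ,
      v ∉ ({nxt u, prv u, nxt (nxt u), prv (prv u)} : Finset (Fin m)) → pay T u v = 0 := by
    intro v _ hvS
    simp only [Finset.mem_insert, Finset.mem_singleton, not_or] at hvS
    exact pay_eq_zero hm u v hvS
  rw [← Finset.sum_subset (Finset.subset_univ _) hzero,
    Finset.sum_insert (by simp [d1, d2, d3]),
    Finset.sum_insert (by simp [d4, d5]),
    Finset.sum_insert (by simp [d6]),
    Finset.sum_singleton]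
  ring

set_option maxHeartbeats 1600000 in
lemma budget (hT : IsTriangulation m T) (hm : 6 ≤ m) (u : Fin m) :
    ∑ v : Fin m, pay T u v ≤ wgt (degT T u) := by
  have i1 : prv (nxt u) = u := prv_nxt u
  have i2 : nxt (prv u) = u := nxt_prv u
  have j2 : nxt (prv (prv u)) = prv u := nxt_prv (prv u)
  have k2 : nxt (nxt (prv (prv u))) = u := by rw [j2, i2]
  rw [sum_pay hm u, pay_nxt_val hm u, pay_prv_val hm u, pay_nxt2_val hm u, pay_prv2_val hm u]
  have F1 : ¬(degT T u = 1 ∧ degT T (prv u) = 0 ∧ degT T (nxt u) = 0) := by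
    rintro ⟨a, b, c⟩
    exact no_ear_sandwich hT hm a b c
  have F2 : ¬(degT T u = 0 ∧ degT T (nxt u) = 1 ∧ degT T (nxt (nxt u)) = 0) := by
    rintro ⟨a, b, c⟩
    exact no_ear_sandwich hT hm b (by rw [i1]; exact a) c
  have F3 : ¬(degT T u = 0 ∧ degT T (prv u) = 1 ∧ degT T (prv (prv u)) = 0) := by
    rintro ⟨a, b, c⟩
    exact no_ear_sandwich hT hm b c (by rw [i2]; exact a)
  have F4 : ¬(degT T u = 1 ∧ degT T (nxt u) = 0 ∧ degT T (prv u) = 1 ∧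
      degT T (prv (prv u)) = 0) := by
    rintro ⟨a, b, c, d⟩
    refine no_double_one hT hm (v := prv (prv u)) d (by rw [j2]; exact c) ?_ ?_
    · rw [k2]
      exact a
    · rw [show nxt (nxt (nxt (prv (prv u)))) = nxt u from by rw [k2]]
      exact b
  have F5 : ¬(degT T u = 1 ∧ degT T (prv u) = 0 ∧ degT T (nxt u) = 1 ∧
      degT T (nxt (nxt u)) = 0) := by
    rintro ⟨a, b, c, d⟩
    refine no_double_one hT hm (v := prv u) b (by rw [i2]; exact a) ?_ ?_
    · rw [show nxt (nxt (prv u)) = nxt u from by rw [i2]]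
      exact c
    · rw [show nxt (nxt (nxt (prv u))) = nxt (nxt u) from by rw [i2]]
      exact d
  unfold wgt
  split_ifs <;> omega

end Budget
section Final

variable {m : ℕ} {T : Finset (Fin m × Fin m)}

lemma discharge (hT : IsTriangulation m T) (hm : 6 ≤ m) :
    6 * (Finset.univ.filter (fun v : Fin m => degT T v = 0)).card
      ≤ ∑ u : Fin m, wgt (degT T u) := by
  classical
  calc 6 * (Finset.univ.filter (fun v : Fin m => degT T v = 0)).card
      = ∑ _v ∈ Finset.univ.filter (fun v : Fin m => degT T v = 0), 6 := by
        rw [Finset.sum_const, smul_eq_mul, mul_comm]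
    _ ≤ ∑ v ∈ Finset.univ.filter (fun v : Fin m => degT T v = 0), ∑ u : Fin m, pay T u v := by
        apply Finset.sum_le_sum
        intro v hv
        exact income hT hm (Finset.mem_filter.1 hv).2
    _ ≤ ∑ v : Fin m, ∑ u : Fin m, pay T u v :=
        Finset.sum_le_sum_of_subset (Finset.filter_subset _ _)
    _ = ∑ u : Fin m, ∑ v : Fin m, pay T u v := Finset.sum_comm
    _ ≤ ∑ u : Fin m, wgt (degT T u) := Finset.sum_le_sum (fun u _ => budget hT hm u)

def lw (d : ℕ) : ℕ := if d = 0 then 0 else if d = 1 then 4 else 6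

lemma key_count (hT : IsTriangulation m T) (hm : 6 ≤ m) :
    3 * m ≤ ∑ u : Fin m, lw (degT T u) := by
  classical
  have hd := discharge hT hm
  have hpt : ∀ d : ℕ, 2 * lw d + 6 * (if d = 0 then 1 else 0) = wgt d + 6 := by
    intro d
    unfold lw wgt
    split_ifs <;> omega
  have hsum : ∑ u : Fin m, (2 * lw (degT T u) + 6 * (if degT T u = 0 then 1 else 0))
      = ∑ u : Fin m, (wgt (degT T u) + 6) := Finset.sum_congr rfl (fun u _ => hpt _)
  rw [Finset.sum_add_distrib, Finset.sum_add_distrib, ← Finset.mul_sum, ← Finset.mul_sum] at hsum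
  have hE : ∑ u : Fin m, (if degT T u = 0 then 1 else 0)
      = (Finset.univ.filter (fun v : Fin m => degT T v = 0)).card :=
    (Finset.card_filter _ _).symm
  rw [hE] at hsum
  have hcardU : ∑ _u : Fin m, 6 = m * 6 := by
    rw [Finset.sum_const, smul_eq_mul, Finset.card_univ, Fintype.card_fin]
  rw [hcardU] at hsum
  omega

end Final

theorem catalan_product_bounds {n : ℕ} (hn : 4 ≤ n)
    (T : Finset (Fin (n + 2) × Fin (n + 2))) (hT : IsTriangulation (n + 2) T) :
    2 ^ (n - 2) ≤ ∏ i : Fin (n + 2), catalan (degT T i) ∧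
    (∏ i : Fin (n + 2), catalan (degT T i)) ^ 2 ≤ 2 ^ (5 * n - 14) := by
  classical
  have hm : 6 ≤ n + 2 := by omega
  have hcard := card_T hm hT
  have hsum : ∑ i : Fin (n + 2), degT T i = 2 * n - 2 := by
    rw [sum_deg hT, hcard]
    omega
  set P := ∏ i : Fin (n + 2), catalan (degT T i) with hP
  constructor
  · -- lower bound
    have hears := two_ears hT hm
    set E := Finset.univ.filter (fun v : Fin (n + 2) => degT T v = 0) with hEdef
    set K := Finset.univ.filter (fun v : Fin (n + 2) => ¬ degT T v = 0) with hKdef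
    have hEK : E.card + K.card = n + 2 := by
      rw [hEdef, hKdef, Finset.card_filter_add_card_filter_not, Finset.card_univ,
        Fintype.card_fin]
    have hKn : K.card ≤ n := by omega
    have hpoint : ∀ i : Fin (n + 2),
        2 ^ (degT T i) ≤ (if degT T i = 0 then 1 else 2) * catalan (degT T i) := by
      intro i
      by_cases h : degT T i = 0
      · simp [h, catalan_zero]
      · rw [if_neg h]
        exact catalan_lower (by omega)
    have hprod : ∏ i : Fin (n + 2), 2 ^ (degT T i)
        ≤ ∏ i : Fin (n + 2), (if degT T i = 0 then 1 else 2) * catalan (degT T i) :=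
      Finset.prod_le_prod' (fun i _ => hpoint i)
    rw [Finset.prod_pow_eq_pow_sum, hsum, Finset.prod_mul_distrib] at hprod
    have hw : ∏ i : Fin (n + 2), (if degT T i = 0 then 1 else 2) = 2 ^ K.card := by
      rw [Finset.prod_ite, Finset.prod_const, Finset.prod_const]
      simp [hKdef]
    rw [hw, ← hP] at hprod
    have hsplit : (2:ℕ) ^ (2 * n - 2) = 2 ^ K.card * 2 ^ (2 * n - 2 - K.card) := by
      rw [← pow_add]
      congr 1
      omega
    rw [hsplit] at hprod
    have h1 : 2 ^ (2 * n - 2 - K.card) ≤ P :=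
      Nat.le_of_mul_le_mul_left hprod (by positivity)
    calc (2:ℕ) ^ (n - 2) ≤ 2 ^ (2 * n - 2 - K.card) :=
          Nat.pow_le_pow_right (by omega) (by omega)
      _ ≤ P := h1
  · -- upper bound
    have hkey := key_count hT hm
    have hpoint : ∀ i : Fin (n + 2),
        catalan (degT T i) ^ 2 * 2 ^ (lw (degT T i)) ≤ 2 ^ (4 * degT T i) := by
      intro i
      set d := degT T i with hd
      by_cases h0 : d = 0
      · simp [h0, lw, catalan_zero]
      by_cases h1 : d = 1
      · simp [h1, lw, catalan_one]
      · have h2 : 2 ≤ d := by omega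
        have hc := catalan_upper h2
        have hsq : (8 * catalan d) ^ 2 ≤ (4 ^ d) ^ 2 := Nat.pow_le_pow_left hc 2
        have hlw : lw d = 6 := by unfold lw; rw [if_neg h0, if_neg h1]
        rw [hlw]
        calc catalan d ^ 2 * 2 ^ 6 = (8 * catalan d) ^ 2 := by ring
          _ ≤ (4 ^ d) ^ 2 := hsq
          _ = 2 ^ (4 * d) := by
              rw [show (4:ℕ) = 2 ^ 2 from rfl, ← pow_mul, ← pow_mul]
              ring_nf
    have hprod : ∏ i : Fin (n + 2), (catalan (degT T i) ^ 2 * 2 ^ (lw (degT T i)))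
        ≤ ∏ i : Fin (n + 2), 2 ^ (4 * degT T i) := Finset.prod_le_prod' (fun i _ => hpoint i)
    rw [Finset.prod_mul_distrib, Finset.prod_pow_eq_pow_sum, Finset.prod_pow_eq_pow_sum,
      Finset.prod_pow, ← hP, ← Finset.mul_sum, hsum] at hprod
    have hexp : 4 * (2 * n - 2) = (5 * n - 14) + (3 * n + 6) := by omega
    have hbig : P ^ 2 * 2 ^ (3 * n + 6) ≤ 2 ^ (5 * n - 14) * 2 ^ (3 * n + 6) := by
      calc P ^ 2 * 2 ^ (3 * n + 6)
          ≤ P ^ 2 * 2 ^ (∑ i : Fin (n + 2), lw (degT T i)) := by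
            apply Nat.mul_le_mul_left
            apply Nat.pow_le_pow_right (by omega)
            calc 3 * n + 6 = 3 * (n + 2) := by ring
              _ ≤ _ := hkey
        _ ≤ 2 ^ (4 * (2 * n - 2)) := hprod
        _ = 2 ^ (5 * n - 14) * 2 ^ (3 * n + 6) := by rw [← pow_add, hexp]
    exact Nat.le_of_mul_le_mul_right hbig (by positivity)
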